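/- Suppose α_q ≥ 0 for all q, the equation x = φ_α(x) has a unique solution x, D_α < 1, and additionally C_α ≤ 1/D_α. Then for every X ∈ X_f, ‖X − x·1ₙ‖₁ ≤ (10000 C_α² + 1) n^{15/16}. -/

import Mathlib

open MeasureTheory ProbabilityTheory Real Set

noncomputable section

/-- The real-valued vertex configuration associated to a boolean configuration. -/
def boolToR (n : ℕ) (X : Fin n → Bool) : Fin n → ℝ := fun i => if X i then 1 else 0

/-- The 1-norm on ℝⁿ. -/
def norm1 (n : ℕ) (x : Fin n → ℝ) : ℝ := ∑ i, |x i|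

/-- `C_j^m(X)`: the sum over (m-1)-tuples of pairwise distinct indices, all distinct
from `j`, of the products of the corresponding entries of `X`; `C_j^1 = 1`. -/
def Cvec (n m : ℕ) (X : Fin n → ℝ) (j : Fin n) : ℝ :=
  ∑ g ∈ Finset.univ.filter (fun g : Fin (m - 1) ↪ Fin n => ∀ k, g k ≠ j),
    ∏ k, X (g k)

/-- The subgraph counting function with parameters `p`, `m₁,…,m_l`, `α₁,…,α_l`. -/
def scf (n l : ℕ) (p : ℝ) (m : Fin l → ℕ) (α : Fin l → ℝ) (X : Fin n → ℝ) : ℝ :=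
  (∑ q, (α q / (n : ℝ) ^ (m q - 1)) * ∑ g : Fin (m q) ↪ Fin n, ∏ k, X (g k)) +
    Real.log (p / (1 - p)) * ∑ i, |X i|

/-- The discrete derivative `∂ⱼf(X) = (f(X^{j←1}) - f(X^{j←0}))/2`. -/
def dder (n : ℕ) (f : (Fin n → ℝ) → ℝ) (X : Fin n → ℝ) (j : Fin n) : ℝ :=
  (f (Function.update X j 1) - f (Function.update X j 0)) / 2

/-- The polynomial extension of the discrete gradient of the subgraph counting function:
`∂ⱼf(X) = Σ_q (m_q α_q/(2 n^{m_q-1})) C_j^{m_q}(X) + ½ log(p/(1-p))`. -/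
def gradf (n l : ℕ) (p : ℝ) (m : Fin l → ℕ) (α : Fin l → ℝ) (X : Fin n → ℝ)
    (j : Fin n) : ℝ :=
  (∑ q, ((m q : ℝ) * α q / (2 * (n : ℝ) ^ (m q - 1))) * Cvec n (m q) X j) +
    Real.log (p / (1 - p)) / 2

/-- `C_α = max{2, ½|log(p/(1-p))| + ½ Σ_q |α_q| m_q (m_q - 1)}`. -/
def Calpha (l : ℕ) (p : ℝ) (m : Fin l → ℕ) (α : Fin l → ℝ) : ℝ :=
  max 2 (|Real.log (p / (1 - p))| / 2 + (∑ q, |α q| * (m q : ℝ) * ((m q : ℝ) - 1)) / 2)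

/-- `Φ(X) = (1ₙ + tanh(∇f(X)))/2`, entrywise. -/
def Phi (n l : ℕ) (p : ℝ) (m : Fin l → ℕ) (α : Fin l → ℝ) (X : Fin n → ℝ) :
    Fin n → ℝ :=
  fun j => (1 + Real.tanh (gradf n l p m α X j)) / 2

/-- The set `X_f` of near fixed points of `X ↦ (1ₙ + tanh(∇f(X)))/2` in `[0,1]ⁿ`. -/
def Xf (n l : ℕ) (p : ℝ) (m : Fin l → ℕ) (α : Fin l → ℝ) : Set (Fin n → ℝ) :=
  {X | (∀ i, X i ∈ Set.Icc (0:ℝ) 1) ∧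
    norm1 n (fun j => X j - Phi n l p m α X j) ≤
      5000 * (Calpha l p m α) ^ 2 * (n : ℝ) ^ ((7:ℝ)/8)}

/-- The one-dimensional fixed point function `φ_α`. -/
def phiA (n l : ℕ) (p : ℝ) (m : Fin l → ℕ) (α : Fin l → ℝ) (x : ℝ) : ℝ :=
  (1 + Real.tanh (Real.log (p / (1 - p)) / 2 +
    (∑ q, (m q : ℝ) * α q * (∏ i ∈ Finset.Icc 1 (m q - 1), (1 - (i : ℝ) / n)) *
      x ^ (m q - 1)) / 2)) / 2

/- ## Auxiliary lemmas -/

lemma tanh_hasDerivAt (x : ℝ) : HasDerivAt Real.tanh (1 / Real.cosh x ^ 2) x := by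
  have hc : Real.cosh x ≠ 0 := by positivity
  have h := (Real.hasDerivAt_sinh x).div (Real.hasDerivAt_cosh x) hc
  have : (Real.cosh x * Real.cosh x - Real.sinh x * Real.sinh x) / Real.cosh x ^ 2
      = 1 / Real.cosh x ^ 2 := by
    rw [show Real.cosh x * Real.cosh x - Real.sinh x * Real.sinh x
        = Real.cosh x ^ 2 - Real.sinh x ^ 2 by ring, Real.cosh_sq_sub_sinh_sq]
  rw [this] at h
  have e : Real.tanh = fun y => Real.sinh y / Real.cosh y := funext Real.tanh_eq_sinh_div_cosh
  rw [e]; exact h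

lemma tanh_lip (a b : ℝ) : |Real.tanh a - Real.tanh b| ≤ |a - b| := by
  have := (convex_univ (𝕜 := ℝ) (E := ℝ)).norm_image_sub_le_of_norm_hasDerivWithin_le
    (f := Real.tanh) (f' := fun x => 1 / Real.cosh x ^ 2) (C := 1)
    (fun x _ => (tanh_hasDerivAt x).hasDerivWithinAt) ?_ (Set.mem_univ b) (Set.mem_univ a)
  · simpa [Real.norm_eq_abs] using this
  · intro x _
    have h1 : (1:ℝ) ≤ Real.cosh x := Real.one_le_cosh x
    have : (1:ℝ) ≤ Real.cosh x ^ 2 := by nlinarith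
    rw [Real.norm_eq_abs, abs_of_nonneg (by positivity)]
    rw [div_le_one (by positivity)]
    linarith

lemma descFac_pow_nat (n : ℕ) : ∀ k : ℕ, n^k ≤ (n-1).descFactorial k + k^2 * n^(k-1)
  | 0 => by simp
  | 1 => by
      simp [Nat.descFactorial]
      omega
  | (k+2) => by
      have ih := descFac_pow_nat n (k+1)
      have hd : (n-1).descFactorial (k+2) = (n-1-(k+1)) * (n-1).descFactorial (k+1) :=
        Nat.descFactorial_succ (n-1) (k+1)
      have hle : n * (n-1).descFactorial (k+1) ≤
          (n-1).descFactorial (k+2) + (k+2) * (n-1).descFactorial (k+1) := by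
        rw [hd]
        rcases le_or_gt n (k+2) with h | h
        · nlinarith [Nat.zero_le ((n-1-(k+1)) * (n-1).descFactorial (k+1))]
        · have : n - 1 - (k+1) + (k+2) = n := by omega
          nlinarith [this]
      have hdle : (n-1).descFactorial (k+1) ≤ n^(k+1) := by
        calc (n-1).descFactorial (k+1) ≤ (n-1)^(k+1) := Nat.descFactorial_le_pow _ _
        _ ≤ n^(k+1) := Nat.pow_le_pow_left (by omega) _
      calc n^(k+2) = n * n^(k+1) := by ring
        _ ≤ n * ((n-1).descFactorial (k+1) + (k+1)^2 * n^k) := by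
            exact Nat.mul_le_mul_left n ih
        _ = n * (n-1).descFactorial (k+1) + (k+1)^2 * n^(k+1) := by ring
        _ ≤ (n-1).descFactorial (k+2) + (k+2) * (n-1).descFactorial (k+1)
              + (k+1)^2 * n^(k+1) := by omega
        _ ≤ (n-1).descFactorial (k+2) + (k+2) * n^(k+1) + (k+1)^2 * n^(k+1) := by
            have := Nat.mul_le_mul_left (k+2) hdle; omega
        _ ≤ (n-1).descFactorial (k+2) + (k+2)^2 * n^(k+1) := by
            have h2 : (k+2) * n^(k+1) + (k+1)^2 * n^(k+1) ≤ (k+2)^2 * n^(k+1) := by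
              nlinarith [Nat.zero_le (n^(k+1))]
            omega
        _ = (n-1).descFactorial (k+2) + (k+2)^2 * n^((k+2)-1) := by norm_num

lemma card_filter_emb (n k : ℕ) (j : Fin n) :
    (Finset.univ.filter (fun g : Fin k ↪ Fin n => ∀ i, g i ≠ j)).card
      = (n-1).descFactorial k := by
  classical
  rw [← Fintype.card_subtype]
  have e : {g : Fin k ↪ Fin n // ∀ i, g i ≠ j} ≃ (Fin k ↪ {x : Fin n // x ≠ j}) :=
    { toFun := fun g => ⟨fun i => ⟨g.1 i, g.2 i⟩,
        fun a b hab => g.1.injective (congrArg Subtype.val hab)⟩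
      invFun := fun g => ⟨⟨fun i => (g i).1,
        fun a b hab => g.injective (Subtype.ext hab)⟩, fun i => (g i).2⟩
      left_inv := fun g => by ext i; rfl
      right_inv := fun g => by ext i; rfl }
  rw [Fintype.card_congr e, Fintype.card_embedding_eq]
  congr 1
  · rw [Fintype.card_subtype_compl (p := fun x : Fin n => x = j)]
    simp
  · simp

lemma prod_Icc_desc (n : ℕ) (hn : 1 ≤ n) : ∀ k : ℕ,
    ∏ i ∈ Finset.Icc 1 k, ((n:ℝ) - i) = ((n-1).descFactorial k : ℝ)
  | 0 => by simp
  | (k+1) => by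
      have ih := prod_Icc_desc n hn k
      rw [Finset.prod_Icc_succ_top (by omega), ih]
      rcases le_or_gt (k+1) n with h | h
      · rw [Nat.descFactorial_succ, Nat.cast_mul, Nat.cast_sub (by omega)]
        push_cast [Nat.cast_sub hn]
        ring
      · have h1 : (n-1).descFactorial k = 0 :=
          Nat.descFactorial_eq_zero_iff_lt.2 (by omega)
        have h2 : (n-1).descFactorial (k+1) = 0 :=
          Nat.descFactorial_eq_zero_iff_lt.2 (by omega)
        rw [h1, h2]
        simp

lemma sum_pow_eq (n k : ℕ) (X : Fin n → ℝ) :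
    (∑ i, X i)^k = ∑ f : Fin k → Fin n, ∏ i, X (f i) := by
  classical
  rw [← Fintype.piFinset_univ, ← Finset.prod_univ_sum (fun _ : Fin k => Finset.univ) (fun _ i => X i)]
  simp [Finset.prod_const]

lemma Cvec_bounds (n k : ℕ) (j : Fin n) (X : Fin n → ℝ)
    (hX : ∀ i, X i ∈ Set.Icc (0:ℝ) 1) :
    (∑ g ∈ Finset.univ.filter (fun g : Fin k ↪ Fin n => ∀ i, g i ≠ j), ∏ i, X (g i))
        ≤ (∑ i, X i)^k ∧
    (∑ i, X i)^k - (∑ g ∈ Finset.univ.filter (fun g : Fin k ↪ Fin n => ∀ i, g i ≠ j), ∏ i, X (g i))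
        ≤ (n:ℝ)^k - ((n-1).descFactorial k : ℝ) := by
  classical
  set T : ℝ := ∑ g ∈ Finset.univ.filter (fun g : Fin k ↪ Fin n => ∀ i, g i ≠ j), ∏ i, X (g i) with hT
  set F : Finset (Fin k → Fin n) :=
    (Finset.univ.filter (fun g : Fin k ↪ Fin n => ∀ i, g i ≠ j)).image
      (fun g : Fin k ↪ Fin n => (g : Fin k → Fin n)) with hF
  have hinj : Function.Injective (fun g : Fin k ↪ Fin n => (g : Fin k → Fin n)) :=
    fun a b hab => DFunLike.coe_injective hab
  have hTF : T = ∑ f ∈ F, ∏ i, X (f i) := by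
    rw [hF, Finset.sum_image (fun a _ b _ h => hinj h)]
  have hcardF : F.card = (n-1).descFactorial k := by
    rw [hF, Finset.card_image_of_injective _ hinj, card_filter_emb]
  have hSk := sum_pow_eq n k X
  have hnonneg : ∀ f : Fin k → Fin n, 0 ≤ ∏ i, X (f i) := by
    intro f; exact Finset.prod_nonneg (fun i _ => (hX (f i)).1)
  have hle1 : ∀ f : Fin k → Fin n, ∏ i, X (f i) ≤ 1 := by
    intro f; exact Finset.prod_le_one (fun i _ => (hX (f i)).1) (fun i _ => (hX (f i)).2)
  constructor
  · rw [hTF, hSk]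
    exact Finset.sum_le_sum_of_subset_of_nonneg (Finset.subset_univ F)
      (fun f _ _ => hnonneg f)
  · have hsplit : (∑ f ∈ Finset.univ \ F, ∏ i, X (f i)) + (∑ f ∈ F, ∏ i, X (f i))
        = ∑ f : Fin k → Fin n, ∏ i, X (f i) :=
      Finset.sum_sdiff (Finset.subset_univ F)
    have hbound : (∑ f ∈ Finset.univ \ F, ∏ i, X (f i))
        ≤ ((Finset.univ \ F).card : ℝ) := by
      calc (∑ f ∈ Finset.univ \ F, ∏ i, X (f i))
          ≤ (Finset.univ \ F).card • (1:ℝ) :=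
            Finset.sum_le_card_nsmul _ _ _ (fun f _ => hle1 f)
        _ = ((Finset.univ \ F).card : ℝ) := by simp
    have hcard : ((Finset.univ \ F).card : ℝ) = (n:ℝ)^k - ((n-1).descFactorial k : ℝ) := by
      rw [Finset.card_sdiff_of_subset (Finset.subset_univ F), hcardF]
      have h1 : (Finset.univ : Finset (Fin k → Fin n)).card = n^k := by
        simp [Finset.card_univ]
      rw [h1, Nat.cast_sub]
      · push_cast; ring
      · calc (n-1).descFactorial k ≤ (n-1)^k := Nat.descFactorial_le_pow _ _
          _ ≤ n^k := Nat.pow_le_pow_left (by omega) _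
    rw [hTF, hSk, ← hsplit, ← hcard]
    linarith [hbound]

lemma D_le (n k : ℕ) (hn : 1 ≤ n) (hk : 1 ≤ k) :
    (n:ℝ)^k - ((n-1).descFactorial k : ℝ) ≤ ((k:ℝ) / Real.sqrt n) * (n:ℝ)^k := by
  have hn0 : (0:ℝ) < n := by exact_mod_cast hn
  have hs0 : (0:ℝ) < Real.sqrt n := Real.sqrt_pos.2 hn0
  rcases le_or_gt ((k:ℝ)^2) (n:ℝ) with h | h
  · -- k² ≤ n : use D ≤ k² n^{k-1}
    have hD : (n:ℝ)^k ≤ ((n-1).descFactorial k : ℝ) + (k:ℝ)^2 * (n:ℝ)^(k-1) := by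
      have := descFac_pow_nat n k
      have := (Nat.cast_le (α := ℝ)).2 this
      push_cast at this
      convert this using 2
    have hpow : (n:ℝ)^(k-1) = (n:ℝ)^k / n := by
      rw [eq_div_iff (ne_of_gt hn0), ← pow_succ]
      congr 1
      omega
    have hksqrt : (k:ℝ) ≤ Real.sqrt n := by
      rw [show (n:ℝ) = Real.sqrt n * Real.sqrt n from (Real.mul_self_sqrt hn0.le).symm] at h
      nlinarith [hs0]
    have : (k:ℝ)^2 * (n:ℝ)^(k-1) ≤ ((k:ℝ)/Real.sqrt n) * (n:ℝ)^k := by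
      rw [hpow, mul_div_assoc', div_mul_eq_mul_div, div_le_div_iff₀ hn0 hs0]
      have key : 0 ≤ (k:ℝ) * (n:ℝ)^k * Real.sqrt n * (Real.sqrt n - k) :=
        mul_nonneg (by positivity) (by linarith)
      have key2 : (k:ℝ) * (n:ℝ)^k * Real.sqrt n * Real.sqrt n = (k:ℝ) * (n:ℝ)^k * n := by
        rw [mul_assoc ((k:ℝ) * (n:ℝ)^k), Real.mul_self_sqrt hn0.le]
      nlinarith [key, key2]
    linarith
  · -- n < k² : use D ≤ n^k
    have h1 : (1:ℝ) ≤ (k:ℝ)/Real.sqrt n := by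
      rw [le_div_iff₀ hs0, one_mul]
      calc Real.sqrt n ≤ Real.sqrt ((k:ℝ)^2) := Real.sqrt_le_sqrt h.le
        _ = k := by rw [Real.sqrt_sq (Nat.cast_nonneg k)]
    have h2 : (0:ℝ) ≤ ((n-1).descFactorial k : ℝ) := Nat.cast_nonneg _
    nlinarith [pow_pos hn0 k]

lemma prod_one_sub_abs_le_one (n k : ℕ) (hn : 1 ≤ n) :
    |∏ i ∈ Finset.Icc 1 k, (1 - (i:ℝ)/n)| ≤ 1 := by
  rcases lt_or_ge k n with h | h
  · have h0 : ∀ i ∈ Finset.Icc 1 k, (0:ℝ) ≤ 1 - (i:ℝ)/n := by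
      intro i hi
      have hik : i ≤ k := (Finset.mem_Icc.1 hi).2
      have : (i:ℝ) ≤ n := by exact_mod_cast le_of_lt (lt_of_le_of_lt hik h)
      have hn0 : (0:ℝ) < n := by exact_mod_cast hn
      have : (i:ℝ)/n ≤ 1 := by rw [div_le_one hn0]; exact this
      linarith
    have h1 : ∀ i ∈ Finset.Icc 1 k, (1 - (i:ℝ)/n) ≤ 1 := by
      intro i hi
      have hi1 : 1 ≤ i := (Finset.mem_Icc.1 hi).1
      have hn0 : (0:ℝ) < n := by exact_mod_cast hn
      have : (0:ℝ) ≤ (i:ℝ)/n := by positivity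
      linarith
    rw [abs_of_nonneg (Finset.prod_nonneg h0)]
    exact Finset.prod_le_one h0 h1
  · have : ∏ i ∈ Finset.Icc 1 k, (1 - (i:ℝ)/n) = 0 := by
      apply Finset.prod_eq_zero (i := n) (Finset.mem_Icc.2 ⟨hn, h⟩)
      have hn0 : (n:ℝ) ≠ 0 := by positivity
      field_simp
      norm_num
    rw [this]
    simp

lemma pow_diff_le (y z : ℝ) (hy : y ∈ Set.Icc (0:ℝ) 1) (hz : z ∈ Set.Icc (0:ℝ) 1) :
    ∀ k : ℕ, |y^k - z^k| ≤ k * |y - z|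
  | 0 => by simp
  | (k+1) => by
      have ih := pow_diff_le y z hy hz k
      have h1 : y^(k+1) - z^(k+1) = y * (y^k - z^k) + z^k * (y - z) := by ring
      have hzk : |z^k| ≤ 1 := by
        rw [abs_of_nonneg (pow_nonneg hz.1 k)]
        exact pow_le_one₀ hz.1 hz.2
      have hy1 : |y| ≤ 1 := by rw [abs_of_nonneg hy.1]; exact hy.2
      calc |y^(k+1) - z^(k+1)| ≤ |y * (y^k - z^k)| + |z^k * (y - z)| := by
            rw [h1]; exact abs_add_le _ _
        _ = |y| * |y^k - z^k| + |z^k| * |y - z| := by rw [abs_mul, abs_mul]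
        _ ≤ 1 * (k * |y - z|) + 1 * |y - z| := by
            have hA : |y| * |y^k - z^k| ≤ 1 * (k * |y - z|) :=
              mul_le_mul hy1 ih (abs_nonneg _) zero_le_one
            have hB : |z^k| * |y - z| ≤ 1 * |y - z| :=
              mul_le_mul_of_nonneg_right hzk (abs_nonneg _)
            linarith
        _ = (k+1 : ℕ) * |y - z| := by push_cast; ring

set_option maxHeartbeats 2000000 in
lemma gradf_close (n l : ℕ) (hn : 1 ≤ n) (p : ℝ) (m : Fin l → ℕ) (hm : ∀ q, 2 ≤ m q)
    (α : Fin l → ℝ) (hα : ∀ q, 0 ≤ α q) (X : Fin n → ℝ)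
    (hX : ∀ i, X i ∈ Set.Icc (0:ℝ) 1) (j : Fin n) :
    |gradf n l p m α X j - (Real.log (p / (1 - p)) / 2 +
      (∑ q, (m q : ℝ) * α q * (∏ i ∈ Finset.Icc 1 (m q - 1), (1 - (i : ℝ) / n)) *
        ((∑ i, X i) / n) ^ (m q - 1)) / 2)| ≤ Calpha l p m α / Real.sqrt n := by
  have hn0 : (0:ℝ) < n := by exact_mod_cast hn
  have hs0 : (0:ℝ) < Real.sqrt n := Real.sqrt_pos.2 hn0
  set s : ℝ := (∑ i, X i) / n with hsdef
  have hS0 : 0 ≤ ∑ i, X i := Finset.sum_nonneg fun i _ => (hX i).1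
  have hSn : (∑ i, X i) ≤ n := by
    calc (∑ i, X i) ≤ (Finset.univ : Finset (Fin n)).card • (1:ℝ) :=
          Finset.sum_le_card_nsmul _ _ _ (fun i _ => (hX i).2)
      _ = n := by simp
  have hs01 : 0 ≤ s ∧ s ≤ 1 := ⟨by positivity, by rw [hsdef, div_le_one hn0]; exact hSn⟩
  have hkey : ∀ q, |((m q : ℝ) * α q / (2 * (n : ℝ) ^ (m q - 1))) * Cvec n (m q) X j
      - (m q : ℝ) * α q * (∏ i ∈ Finset.Icc 1 (m q - 1), (1 - (i : ℝ) / n)) * s ^ (m q - 1) / 2|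
      ≤ (m q : ℝ) * α q * ((m q : ℝ) - 1) / (2 * Real.sqrt n) := by
    intro q
    have hmq := hm q
    set k := m q - 1 with hkdef
    have hk1 : 1 ≤ k := by omega
    have hkcast : (k:ℝ) = (m q : ℝ) - 1 := by
      rw [hkdef, Nat.cast_sub (by omega)]; norm_num
    have hnk0 : (0:ℝ) < (n:ℝ)^k := pow_pos hn0 k
    have hprod : (∏ i ∈ Finset.Icc 1 k, (1 - (i:ℝ)/n)) = ((n-1).descFactorial k : ℝ) / (n:ℝ)^k := by
      have hcongr : ∀ i ∈ Finset.Icc 1 k, (1 - (i:ℝ)/n) = ((n:ℝ) - i)/n := by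
        intro i _; field_simp
      rw [Finset.prod_congr rfl hcongr, Finset.prod_div_distrib, prod_Icc_desc n hn k,
        Finset.prod_const, Nat.card_Icc]
      norm_num
    obtain ⟨hb1, hb2⟩ := Cvec_bounds n k j X hX
    have hCvec : Cvec n (m q) X j
        = ∑ g ∈ Finset.univ.filter (fun g : Fin k ↪ Fin n => ∀ i, g i ≠ j), ∏ i, X (g i) := rfl
    have hSpow : (∑ i, X i)^k = (n:ℝ)^k * s^k := by
      rw [hsdef, div_pow, mul_div_cancel₀]
      positivity
    have hdesc_le : ((n-1).descFactorial k : ℝ) ≤ (n:ℝ)^k := by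
      have : (n-1).descFactorial k ≤ n^k :=
        le_trans (Nat.descFactorial_le_pow _ _) (Nat.pow_le_pow_left (by omega) _)
      exact_mod_cast this
    have hsk0 : 0 ≤ s^k := pow_nonneg hs01.1 k
    have hsk1 : s^k ≤ 1 := pow_le_one₀ hs01.1 hs01.2
    set A : ℝ := ((n-1).descFactorial k : ℝ) with hAdef
    have hA0 : 0 ≤ A := Nat.cast_nonneg _
    have hA1 : A * s^k ≤ (∑ i, X i)^k := by rw [hSpow]; nlinarith
    have hA2 : (∑ i, X i)^k - A * s^k ≤ (n:ℝ)^k - A := by rw [hSpow]; nlinarith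
    have hdiff : |Cvec n (m q) X j - A * s^k| ≤ (n:ℝ)^k - A := by
      rw [hCvec, abs_le]
      constructor
      · nlinarith
      · nlinarith
    have hDle := D_le n k hn hk1
    have heq : ((m q : ℝ) * α q / (2 * (n : ℝ) ^ (m q - 1))) * Cvec n (m q) X j
        - (m q : ℝ) * α q * (∏ i ∈ Finset.Icc 1 (m q - 1), (1 - (i : ℝ) / n)) * s ^ (m q - 1) / 2
        = ((m q : ℝ) * α q / (2 * (n:ℝ)^k)) * (Cvec n (m q) X j - A * s^k) := by
      rw [show m q - 1 = k from hkdef.symm ▸ rfl, hprod]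
      field_simp
    rw [heq, abs_mul, abs_of_nonneg (show (0:ℝ) ≤ (m q:ℝ) * α q / (2 * (n:ℝ)^k) by
      have := hα q; positivity)]
    have hma : 0 ≤ (m q : ℝ) * α q := by
      have := hα q; positivity
    calc ((m q:ℝ)*α q/(2*(n:ℝ)^k)) * |Cvec n (m q) X j - A * s^k|
        ≤ ((m q:ℝ)*α q/(2*(n:ℝ)^k)) * (((k:ℝ)/Real.sqrt n) * (n:ℝ)^k) := by
          apply mul_le_mul_of_nonneg_left (le_trans hdiff hDle) (by positivity)
      _ = (m q:ℝ)*α q*(k:ℝ)/(2*Real.sqrt n) := by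
          field_simp
      _ = (m q:ℝ)*α q*((m q:ℝ)-1)/(2*Real.sqrt n) := by rw [hkcast]
  -- assemble
  have hsplit : gradf n l p m α X j - (Real.log (p / (1 - p)) / 2 +
      (∑ q, (m q : ℝ) * α q * (∏ i ∈ Finset.Icc 1 (m q - 1), (1 - (i : ℝ) / n)) *
        s ^ (m q - 1)) / 2)
      = ∑ q, (((m q : ℝ) * α q / (2 * (n : ℝ) ^ (m q - 1))) * Cvec n (m q) X j
        - (m q : ℝ) * α q * (∏ i ∈ Finset.Icc 1 (m q - 1), (1 - (i : ℝ) / n)) * s ^ (m q - 1) / 2) := by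
    rw [gradf, Finset.sum_sub_distrib, ← Finset.sum_div]
    ring
  rw [hsplit]
  calc |∑ q, (((m q : ℝ) * α q / (2 * (n : ℝ) ^ (m q - 1))) * Cvec n (m q) X j
        - (m q : ℝ) * α q * (∏ i ∈ Finset.Icc 1 (m q - 1), (1 - (i : ℝ) / n)) * s ^ (m q - 1) / 2)|
      ≤ ∑ q, |((m q : ℝ) * α q / (2 * (n : ℝ) ^ (m q - 1))) * Cvec n (m q) X j
        - (m q : ℝ) * α q * (∏ i ∈ Finset.Icc 1 (m q - 1), (1 - (i : ℝ) / n)) * s ^ (m q - 1) / 2| :=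
        Finset.abs_sum_le_sum_abs _ _
    _ ≤ ∑ q, (m q : ℝ) * α q * ((m q : ℝ) - 1) / (2 * Real.sqrt n) :=
        Finset.sum_le_sum (fun q _ => hkey q)
    _ = (∑ q, (m q : ℝ) * α q * ((m q : ℝ) - 1)) / (2 * Real.sqrt n) := by
        rw [Finset.sum_div]
    _ ≤ Calpha l p m α / Real.sqrt n := by
        have habs : (∑ q, (m q : ℝ) * α q * ((m q : ℝ) - 1))
            = ∑ q, |α q| * (m q : ℝ) * ((m q : ℝ) - 1) := by
          apply Finset.sum_congr rfl
          intro q _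
          rw [abs_of_nonneg (hα q)]
          ring
        have hC2 : (∑ q, |α q| * (m q : ℝ) * ((m q : ℝ) - 1)) / 2 ≤ Calpha l p m α := by
          have h1 := le_max_right (2:ℝ)
            (|Real.log (p / (1 - p))| / 2 + (∑ q, |α q| * (m q : ℝ) * ((m q : ℝ) - 1)) / 2)
          have h2 : 0 ≤ |Real.log (p / (1 - p))| / 2 := by positivity
          rw [Calpha]
          linarith
        rw [habs, div_le_div_iff₀ (by positivity) hs0]
        calc (∑ q, |α q| * (m q:ℝ) * ((m q:ℝ) - 1)) * Real.sqrt n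
            ≤ (2 * Calpha l p m α) * Real.sqrt n := by
              apply mul_le_mul_of_nonneg_right (by linarith) hs0.le
          _ = Calpha l p m α * (2 * Real.sqrt n) := by ring

lemma phiA_lip (n l : ℕ) (hn : 1 ≤ n) (p : ℝ) (m : Fin l → ℕ) (hm : ∀ q, 2 ≤ m q)
    (α : Fin l → ℝ) (hα : ∀ q, 0 ≤ α q) (y z : ℝ) (hy : y ∈ Set.Icc (0:ℝ) 1)
    (hz : z ∈ Set.Icc (0:ℝ) 1) :
    |phiA n l p m α y - phiA n l p m α z| ≤ Calpha l p m α * |y - z| := by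
  set L := Real.log (p / (1 - p)) with hL
  set Ay := L / 2 + (∑ q, (m q : ℝ) * α q * (∏ i ∈ Finset.Icc 1 (m q - 1), (1 - (i : ℝ) / n)) *
      y ^ (m q - 1)) / 2 with hAy
  set Az := L / 2 + (∑ q, (m q : ℝ) * α q * (∏ i ∈ Finset.Icc 1 (m q - 1), (1 - (i : ℝ) / n)) *
      z ^ (m q - 1)) / 2 with hAz
  have h1 : phiA n l p m α y - phiA n l p m α z = (Real.tanh Ay - Real.tanh Az) / 2 := by
    rw [phiA, phiA]
    ring
  have hdiff : Ay - Az = (∑ q, (m q : ℝ) * α q *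
      (∏ i ∈ Finset.Icc 1 (m q - 1), (1 - (i : ℝ) / n)) * (y ^ (m q - 1) - z ^ (m q - 1))) / 2 := by
    rw [hAy, hAz]
    have h2 : (∑ q, (m q : ℝ) * α q * (∏ i ∈ Finset.Icc 1 (m q - 1), (1 - (i : ℝ) / n)) *
        (y ^ (m q - 1) - z ^ (m q - 1)))
        = (∑ q, (m q : ℝ) * α q * (∏ i ∈ Finset.Icc 1 (m q - 1), (1 - (i : ℝ) / n)) *
            y ^ (m q - 1))
          - (∑ q, (m q : ℝ) * α q * (∏ i ∈ Finset.Icc 1 (m q - 1), (1 - (i : ℝ) / n)) *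
            z ^ (m q - 1)) := by
      rw [← Finset.sum_sub_distrib]
      apply Finset.sum_congr rfl
      intro q _
      ring
    rw [h2]
    ring
  have hterm : ∀ q, |(m q : ℝ) * α q *
      (∏ i ∈ Finset.Icc 1 (m q - 1), (1 - (i : ℝ) / n)) * (y ^ (m q - 1) - z ^ (m q - 1))|
      ≤ (m q : ℝ) * α q * ((m q : ℝ) - 1) * |y - z| := by
    intro q
    have hma : 0 ≤ (m q : ℝ) * α q := by have := hα q; positivity
    have hp1 := prod_one_sub_abs_le_one n (m q - 1) hn
    have hp2 := pow_diff_le y z hy hz (m q - 1)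
    have hkcast : ((m q - 1 : ℕ):ℝ) = (m q : ℝ) - 1 := by
      rw [Nat.cast_sub (by have := hm q; omega)]; norm_num
    calc |(m q : ℝ) * α q * (∏ i ∈ Finset.Icc 1 (m q - 1), (1 - (i : ℝ) / n)) *
          (y ^ (m q - 1) - z ^ (m q - 1))|
        = ((m q : ℝ) * α q) * |∏ i ∈ Finset.Icc 1 (m q - 1), (1 - (i : ℝ) / n)| *
          |y ^ (m q - 1) - z ^ (m q - 1)| := by
          rw [abs_mul, abs_mul, abs_of_nonneg hma]
      _ ≤ ((m q : ℝ) * α q) * 1 * (((m q - 1 : ℕ):ℝ) * |y - z|) := by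
          apply mul_le_mul _ hp2 (abs_nonneg _) (by positivity)
          exact mul_le_mul_of_nonneg_left hp1 hma
      _ = (m q : ℝ) * α q * ((m q : ℝ) - 1) * |y - z| := by
          rw [hkcast]; ring
  have hsum : |Ay - Az| ≤ (∑ q, (m q : ℝ) * α q * ((m q : ℝ) - 1)) * |y - z| / 2 := by
    rw [hdiff, abs_div]
    rw [abs_of_nonneg (by norm_num : (0:ℝ) ≤ 2)]
    apply div_le_div_of_nonneg_right _ (by norm_num)
    calc |∑ q, (m q : ℝ) * α q * (∏ i ∈ Finset.Icc 1 (m q - 1), (1 - (i : ℝ) / n)) *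
          (y ^ (m q - 1) - z ^ (m q - 1))|
        ≤ ∑ q, |(m q : ℝ) * α q * (∏ i ∈ Finset.Icc 1 (m q - 1), (1 - (i : ℝ) / n)) *
          (y ^ (m q - 1) - z ^ (m q - 1))| := Finset.abs_sum_le_sum_abs _ _
      _ ≤ ∑ q, (m q : ℝ) * α q * ((m q : ℝ) - 1) * |y - z| :=
          Finset.sum_le_sum (fun q _ => hterm q)
      _ = (∑ q, (m q : ℝ) * α q * ((m q : ℝ) - 1)) * |y - z| := by
          rw [← Finset.sum_mul]
  have hCb : (∑ q, (m q : ℝ) * α q * ((m q : ℝ) - 1)) / 2 ≤ Calpha l p m α := by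
    have habs : (∑ q, (m q : ℝ) * α q * ((m q : ℝ) - 1))
        = ∑ q, |α q| * (m q : ℝ) * ((m q : ℝ) - 1) := by
      apply Finset.sum_congr rfl
      intro q _
      rw [abs_of_nonneg (hα q)]; ring
    have h1 := le_max_right (2:ℝ)
      (|Real.log (p / (1 - p))| / 2 + (∑ q, |α q| * (m q : ℝ) * ((m q : ℝ) - 1)) / 2)
    have h2 : 0 ≤ |Real.log (p / (1 - p))| / 2 := by positivity
    rw [Calpha, habs]
    linarith
  rw [h1, abs_div, abs_of_nonneg (by norm_num : (0:ℝ) ≤ 2)]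
  have htl := tanh_lip Ay Az
  have hC0 : (0:ℝ) ≤ Calpha l p m α := le_trans (by norm_num) (le_max_left _ _)
  have habsyz : 0 ≤ |y - z| := abs_nonneg _
  calc |Real.tanh Ay - Real.tanh Az| / 2 ≤ |Ay - Az| / 2 := by linarith
    _ ≤ ((∑ q, (m q : ℝ) * α q * ((m q : ℝ) - 1)) * |y - z| / 2) / 2 := by linarith
    _ ≤ Calpha l p m α * |y - z| := by nlinarith [hCb, habsyz, hC0]

set_option maxHeartbeats 2000000 in
/-- under the additional assumption `C_α ≤ 1/D_α`, every `X ∈ X_f`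
satisfies `‖X - x·1ₙ‖₁ ≤ (10000 C_α² + 1) n^{15/16}`. -/
theorem stmt12 (n l : ℕ) (hn : 0 < n) (p : ℝ) (hp : p ∈ Set.Ioo (0:ℝ) 1)
    (m : Fin l → ℕ) (hm : ∀ q, 2 ≤ m q) (hminj : Function.Injective m)
    (α : Fin l → ℝ) (hα : ∀ q, 0 ≤ α q)
    (x : ℝ) (hx : x ∈ Set.Ioo (0:ℝ) 1) (hfix : x = phiA n l p m α x)
    (huniq : ∀ y ∈ Set.Icc (0:ℝ) 1, y = phiA n l p m α y → y = x)
    (Dα : ℝ)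
    (hD : Dα = sSup {r : ℝ | ∃ y ∈ Set.Icc (0:ℝ) 1, y ≠ x ∧
      r = |phiA n l p m α y - x| / |y - x|})
    (hD1 : Dα < 1) (hCD : Calpha l p m α ≤ 1 / Dα) :
    ∀ X ∈ Xf n l p m α,
      norm1 n (fun i => X i - x) ≤
        (10000 * (Calpha l p m α) ^ 2 + 1) * (n : ℝ) ^ ((15:ℝ)/16) := by
  intro X hXf
  obtain ⟨hX, hXnear⟩ := hXf
  set C := Calpha l p m α with hCdef
  have hC2 : (2:ℝ) ≤ C := le_max_left _ _
  have hC0 : (0:ℝ) < C := by linarith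
  have hn1 : (1:ℝ) ≤ (n:ℝ) := by exact_mod_cast hn
  have hn0 : (0:ℝ) < (n:ℝ) := by linarith
  have hs0 : (0:ℝ) < Real.sqrt n := Real.sqrt_pos.2 hn0
  have hx01 : x ∈ Set.Icc (0:ℝ) 1 := ⟨hx.1.le, hx.2.le⟩
  -- properties of Dα
  have hDpos : 0 < Dα := by
    by_contra h
    push_neg at h
    have : 1 / Dα ≤ 0 := one_div_nonpos.2 h
    linarith
  have hDC : Dα * C ≤ 1 := by
    have := mul_le_mul_of_nonneg_left hCD hDpos.le
    rwa [mul_one_div, div_self (ne_of_gt hDpos)] at this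
  have hDhalf : Dα ≤ 1/2 := by nlinarith
  have hDinvC : Dα ≤ 1 / C := by
    rw [le_div_iff₀ hC0]
    linarith [mul_comm Dα C]
  -- contraction property
  have hcontr : ∀ y ∈ Set.Icc (0:ℝ) 1, |phiA n l p m α y - x| ≤ Dα * |y - x| := by
    intro y hy
    by_cases hyx : y = x
    · subst hyx
      rw [← hfix]
      simp
    · have hmem : |phiA n l p m α y - x| / |y - x| ∈ {r : ℝ | ∃ y ∈ Set.Icc (0:ℝ) 1, y ≠ x ∧
          r = |phiA n l p m α y - x| / |y - x|} := ⟨y, hy, hyx, rfl⟩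
      have hbdd : BddAbove {r : ℝ | ∃ y ∈ Set.Icc (0:ℝ) 1, y ≠ x ∧
          r = |phiA n l p m α y - x| / |y - x|} := by
        refine ⟨C, fun r hr => ?_⟩
        obtain ⟨z, hz, hzx, rfl⟩ := hr
        have hzpos : 0 < |z - x| := abs_pos.2 (sub_ne_zero.2 hzx)
        rw [div_le_iff₀ hzpos]
        calc |phiA n l p m α z - x| = |phiA n l p m α z - phiA n l p m α x| := by rw [← hfix]
          _ ≤ C * |z - x| := phiA_lip n l hn p m hm α hα z x hz hx01
      have hle : |phiA n l p m α y - x| / |y - x| ≤ Dα := by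
        rw [hD]
        exact le_csSup hbdd hmem
      have hypos : 0 < |y - x| := abs_pos.2 (sub_ne_zero.2 hyx)
      calc |phiA n l p m α y - x| = (|phiA n l p m α y - x| / |y - x|) * |y - x| := by
            field_simp
        _ ≤ Dα * |y - x| := mul_le_mul_of_nonneg_right hle hypos.le
  -- the empirical mean
  set s : ℝ := (∑ i, X i) / n with hsdef
  have hS0 : 0 ≤ ∑ i, X i := Finset.sum_nonneg fun i _ => (hX i).1
  have hSn : (∑ i, X i) ≤ n := by
    calc (∑ i, X i) ≤ (Finset.univ : Finset (Fin n)).card • (1:ℝ) :=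
          Finset.sum_le_card_nsmul _ _ _ (fun i _ => (hX i).2)
      _ = n := by simp
  have hs01 : s ∈ Set.Icc (0:ℝ) 1 := ⟨by positivity, by rw [hsdef, div_le_one hn0]; exact hSn⟩
  -- per-coordinate estimate
  have hE1 : ∀ j, |Phi n l p m α X j - phiA n l p m α s| ≤ C / (2 * Real.sqrt n) := by
    intro j
    have hgc := gradf_close n l hn p m hm α hα X hX j
    rw [← hsdef] at hgc
    have heq : Phi n l p m α X j - phiA n l p m α s
        = (Real.tanh (gradf n l p m α X j) - Real.tanh (Real.log (p / (1 - p)) / 2 +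
          (∑ q, (m q : ℝ) * α q * (∏ i ∈ Finset.Icc 1 (m q - 1), (1 - (i : ℝ) / n)) *
            s ^ (m q - 1)) / 2)) / 2 := by
      rw [Phi, phiA]
      ring
    rw [heq, abs_div, abs_of_nonneg (by norm_num : (0:ℝ) ≤ 2)]
    have htl := tanh_lip (gradf n l p m α X j) (Real.log (p / (1 - p)) / 2 +
      (∑ q, (m q : ℝ) * α q * (∏ i ∈ Finset.Icc 1 (m q - 1), (1 - (i : ℝ) / n)) *
        s ^ (m q - 1)) / 2)
    calc _ ≤ (C / Real.sqrt n) / 2 := by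
          apply div_le_div_of_nonneg_right _ (by norm_num)
          exact le_trans htl hgc
      _ = C / (2 * Real.sqrt n) := by ring
  -- the three sums
  have hsum1 : (∑ j, |X j - Phi n l p m α X j|) ≤ 5000 * C^2 * (n:ℝ)^((7:ℝ)/8) := by
    simpa [norm1] using hXnear
  have hsum2 : (∑ j, |Phi n l p m α X j - phiA n l p m α s|) ≤ C * Real.sqrt n / 2 := by
    have hss : Real.sqrt n * Real.sqrt n = (n:ℝ) := Real.mul_self_sqrt hn0.le
    calc (∑ j, |Phi n l p m α X j - phiA n l p m α s|)
        ≤ (Finset.univ : Finset (Fin n)).card • (C / (2 * Real.sqrt n)) :=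
          Finset.sum_le_card_nsmul _ _ _ (fun j _ => hE1 j)
      _ = (n:ℝ) * (C / (2 * Real.sqrt n)) := by simp [nsmul_eq_mul]
      _ = C * Real.sqrt n / 2 := by
          rw [eq_div_iff (by norm_num : (2:ℝ) ≠ 0)]
          field_simp
          nlinarith [hss]
  have hphis : |phiA n l p m α s - x| ≤ Dα * |s - x| := hcontr s hs01
  -- |ΣX − n·phiA s| bound
  have hfixb : |(∑ i, X i) - n * phiA n l p m α s|
      ≤ 5000 * C^2 * (n:ℝ)^((7:ℝ)/8) + C * Real.sqrt n / 2 := by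
    have hsplit : (∑ i, X i) - n * phiA n l p m α s
        = ∑ j, ((X j - Phi n l p m α X j) + (Phi n l p m α X j - phiA n l p m α s)) := by
      rw [Finset.sum_add_distrib, Finset.sum_sub_distrib, Finset.sum_sub_distrib,
        Finset.sum_const, Finset.card_univ, Fintype.card_fin, nsmul_eq_mul]
      ring
    rw [hsplit]
    calc |∑ j, ((X j - Phi n l p m α X j) + (Phi n l p m α X j - phiA n l p m α s))|
        ≤ ∑ j, |(X j - Phi n l p m α X j) + (Phi n l p m α X j - phiA n l p m α s)| :=
          Finset.abs_sum_le_sum_abs _ _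
      _ ≤ ∑ j, (|X j - Phi n l p m α X j| + |Phi n l p m α X j - phiA n l p m α s|) :=
          Finset.sum_le_sum (fun j _ => abs_add_le _ _)
      _ = (∑ j, |X j - Phi n l p m α X j|) + (∑ j, |Phi n l p m α X j - phiA n l p m α s|) :=
          Finset.sum_add_distrib
      _ ≤ 5000 * C^2 * (n:ℝ)^((7:ℝ)/8) + C * Real.sqrt n / 2 := by
          exact add_le_add hsum1 hsum2
  -- |ΣX − n·x| bound
  have hnsx : (n:ℝ) * |s - x| = |(∑ i, X i) - n * x| := by
    rw [← abs_of_pos hn0, ← abs_mul]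
    congr 1
    rw [hsdef]
    field_simp
    rw [abs_of_pos hn0]; ring
  have hSx : |(∑ i, X i) - n * x| ≤ 2 * (5000 * C^2 * (n:ℝ)^((7:ℝ)/8) + C * Real.sqrt n / 2) := by
    have h1 : |(∑ i, X i) - n * x| ≤ |(∑ i, X i) - n * phiA n l p m α s|
        + (n:ℝ) * |phiA n l p m α s - x| := by
      calc |(∑ i, X i) - n * x|
          = |((∑ i, X i) - n * phiA n l p m α s) + (n:ℝ) * (phiA n l p m α s - x)| := by
            congr 1; ring
        _ ≤ |(∑ i, X i) - n * phiA n l p m α s| + |(n:ℝ) * (phiA n l p m α s - x)| := abs_add_le _ _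
        _ = |(∑ i, X i) - n * phiA n l p m α s| + (n:ℝ) * |phiA n l p m α s - x| := by
            rw [abs_mul, abs_of_pos hn0]
    have h2 : (n:ℝ) * |phiA n l p m α s - x| ≤ Dα * |(∑ i, X i) - n * x| := by
      calc (n:ℝ) * |phiA n l p m α s - x| ≤ (n:ℝ) * (Dα * |s - x|) :=
            mul_le_mul_of_nonneg_left hphis hn0.le
        _ = Dα * ((n:ℝ) * |s - x|) := by ring
        _ = Dα * |(∑ i, X i) - n * x| := by rw [hnsx]
    have h3 : (1 - Dα) * |(∑ i, X i) - n * x|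
        ≤ 5000 * C^2 * (n:ℝ)^((7:ℝ)/8) + C * Real.sqrt n / 2 := by nlinarith [hfixb]
    nlinarith [abs_nonneg ((∑ i, X i) - n * x)]
  -- assemble the final bound
  have hfinal : (∑ j, |X j - x|) ≤ 10000 * C^2 * (n:ℝ)^((7:ℝ)/8) + C * Real.sqrt n := by
    have hmain : (∑ j, |X j - x|)
        ≤ (∑ j, |X j - Phi n l p m α X j|) + (∑ j, |Phi n l p m α X j - phiA n l p m α s|)
          + (n:ℝ) * |phiA n l p m α s - x| := by
      have : ∀ j : Fin n, |X j - x| ≤ |X j - Phi n l p m α X j|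
          + |Phi n l p m α X j - phiA n l p m α s| + |phiA n l p m α s - x| := by
        intro j
        calc |X j - x| = |(X j - Phi n l p m α X j) + (Phi n l p m α X j - phiA n l p m α s)
            + (phiA n l p m α s - x)| := by congr 1; ring
          _ ≤ _ := abs_add_three _ _ _
      calc (∑ j, |X j - x|) ≤ ∑ j, (|X j - Phi n l p m α X j|
            + |Phi n l p m α X j - phiA n l p m α s| + |phiA n l p m α s - x|) :=
            Finset.sum_le_sum (fun j _ => this j)
        _ = (∑ j, |X j - Phi n l p m α X j|) + (∑ j, |Phi n l p m α X j - phiA n l p m α s|)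
            + (n:ℝ) * |phiA n l p m α s - x| := by
            rw [Finset.sum_add_distrib, Finset.sum_add_distrib, Finset.sum_const,
              Finset.card_univ, Fintype.card_fin, nsmul_eq_mul]
    have h2 : (n:ℝ) * |phiA n l p m α s - x| ≤ Dα * |(∑ i, X i) - n * x| := by
      calc (n:ℝ) * |phiA n l p m α s - x| ≤ (n:ℝ) * (Dα * |s - x|) :=
            mul_le_mul_of_nonneg_left hphis hn0.le
        _ = Dα * ((n:ℝ) * |s - x|) := by ring
        _ = Dα * |(∑ i, X i) - n * x| := by rw [hnsx]
    have h4 : Dα * |(∑ i, X i) - n * x|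
        ≤ Dα * (2 * (5000 * C^2 * (n:ℝ)^((7:ℝ)/8) + C * Real.sqrt n / 2)) :=
      mul_le_mul_of_nonneg_left hSx hDpos.le
    have hA0 : (0:ℝ) ≤ (n:ℝ)^((7:ℝ)/8) := Real.rpow_nonneg hn0.le _
    -- Dα * (10000 C² n^{7/8} + C √n) ≤ 10000 C n^{7/8} + √n  (using Dα C ≤ 1)
    have h5 : Dα * (2 * (5000 * C^2 * (n:ℝ)^((7:ℝ)/8) + C * Real.sqrt n / 2))
        ≤ 10000 * C * (n:ℝ)^((7:ℝ)/8) + Real.sqrt n := by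
      have e1 : Dα * (10000 * C^2 * (n:ℝ)^((7:ℝ)/8)) ≤ 10000 * C * (n:ℝ)^((7:ℝ)/8) := by
        nlinarith [mul_nonneg (mul_nonneg hC0.le hA0) (sub_nonneg.2 hDC)]
      have e2 : Dα * (C * Real.sqrt n) ≤ Real.sqrt n := by
        nlinarith [mul_nonneg hs0.le (sub_nonneg.2 hDC)]
      nlinarith
    have h6 : 10000 * C * (n:ℝ)^((7:ℝ)/8) ≤ 5000 * C^2 * (n:ℝ)^((7:ℝ)/8) := by
      nlinarith [mul_nonneg (mul_nonneg hC0.le hA0) (sub_nonneg.2 hC2)]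
    have h7 : C * Real.sqrt n / 2 + Real.sqrt n ≤ C * Real.sqrt n := by
      nlinarith [mul_nonneg hs0.le (sub_nonneg.2 hC2)]
    calc (∑ j, |X j - x|)
        ≤ (5000 * C^2 * (n:ℝ)^((7:ℝ)/8)) + (C * Real.sqrt n / 2)
          + (10000 * C * (n:ℝ)^((7:ℝ)/8) + Real.sqrt n) := by
          linarith [hmain, hsum1, hsum2, h2, h4, h5]
      _ ≤ 10000 * C^2 * (n:ℝ)^((7:ℝ)/8) + C * Real.sqrt n := by linarith
  -- case split on the size of n
  have hnorm1 : norm1 n (fun i => X i - x) = ∑ j, |X j - x| := rfl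
  rw [hnorm1]
  have h1516 : (0:ℝ) ≤ (n:ℝ)^((15:ℝ)/16) := Real.rpow_nonneg hn0.le _
  have hCb0 : (0:ℝ) < 10000 * C^2 + 1 := by positivity
  by_cases hsize : (n:ℝ) ≤ (10000 * C^2 + 1)^(16:ℕ)
  · -- trivial bound
    have htriv : (∑ j, |X j - x|) ≤ (n:ℝ) := by
      calc (∑ j, |X j - x|) ≤ (Finset.univ : Finset (Fin n)).card • (1:ℝ) := by
            apply Finset.sum_le_card_nsmul
            intro j _
            rw [abs_le]
            constructor
            · linarith [(hX j).1, (hX j).2, hx01.1, hx01.2]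
            · linarith [(hX j).1, (hX j).2, hx01.1, hx01.2]
        _ = (n:ℝ) := by simp
    have hroot : (n:ℝ)^((1:ℝ)/16) ≤ 10000 * C^2 + 1 := by
      have h := Real.rpow_le_rpow hn0.le hsize (by norm_num : (0:ℝ) ≤ 1/16)
      rwa [← Real.rpow_natCast (10000 * C^2 + 1) 16, ← Real.rpow_mul hCb0.le,
        show ((16:ℕ):ℝ) * (1/16) = 1 by norm_num, Real.rpow_one] at h
    have hneq : (n:ℝ) = (n:ℝ)^((1:ℝ)/16) * (n:ℝ)^((15:ℝ)/16) := by
      rw [← Real.rpow_add hn0]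
      norm_num
    calc (∑ j, |X j - x|) ≤ (n:ℝ) := htriv
      _ = (n:ℝ)^((1:ℝ)/16) * (n:ℝ)^((15:ℝ)/16) := hneq
      _ ≤ (10000 * C^2 + 1) * (n:ℝ)^((15:ℝ)/16) := mul_le_mul_of_nonneg_right hroot h1516
  · push_neg at hsize
    have hroot : 10000 * C^2 + 1 ≤ (n:ℝ)^((1:ℝ)/16) := by
      have h := Real.rpow_le_rpow (by positivity) hsize.le (by norm_num : (0:ℝ) ≤ 1/16)
      rwa [← Real.rpow_natCast (10000 * C^2 + 1) 16, ← Real.rpow_mul hCb0.le,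
        show ((16:ℕ):ℝ) * (1/16) = 1 by norm_num, Real.rpow_one] at h
    have hC716 : C ≤ (n:ℝ)^((7:ℝ)/16) := by
      have h1 : C ≤ 10000 * C^2 + 1 := by nlinarith
      have h2 : (n:ℝ)^((1:ℝ)/16) ≤ (n:ℝ)^((7:ℝ)/16) :=
        Real.rpow_le_rpow_of_exponent_le hn1 (by norm_num)
      linarith
    have hCs : C * Real.sqrt n ≤ (n:ℝ)^((15:ℝ)/16) := by
      have hsq : Real.sqrt n = (n:ℝ)^((1:ℝ)/2) := Real.sqrt_eq_rpow _
      have hsplit : (n:ℝ)^((15:ℝ)/16) = (n:ℝ)^((7:ℝ)/16) * (n:ℝ)^((1:ℝ)/2) := by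
        rw [← Real.rpow_add hn0]
        norm_num
      rw [hsq, hsplit]
      exact mul_le_mul_of_nonneg_right hC716 (Real.rpow_nonneg hn0.le _)
    have h78 : (n:ℝ)^((7:ℝ)/8) ≤ (n:ℝ)^((15:ℝ)/16) :=
      Real.rpow_le_rpow_of_exponent_le hn1 (by norm_num)
    calc (∑ j, |X j - x|) ≤ 10000 * C^2 * (n:ℝ)^((7:ℝ)/8) + C * Real.sqrt n := hfinal
      _ ≤ 10000 * C^2 * (n:ℝ)^((15:ℝ)/16) + (n:ℝ)^((15:ℝ)/16) := by
          have : 10000 * C^2 * (n:ℝ)^((7:ℝ)/8) ≤ 10000 * C^2 * (n:ℝ)^((15:ℝ)/16) := by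
            apply mul_le_mul_of_nonneg_left h78 (by positivity)
          linarith
      _ = (10000 * C^2 + 1) * (n:ℝ)^((15:ℝ)/16) := by ring

end
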